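/- For every almost positive formula A whose atoms are among p_1, …, p_k and every tuple of formulas φ_1, …, φ_k, there exists a finite multiset Π of modal Horn formulas all of whose atoms are angled atoms such that CK proves Π, (A(φ̄))^t ⇒ A(φ̄^t), and CK proves (⇒ ⋀Π^s), where s is the standard substitution. -/

import Mathlib

set_option autoImplicit false

namespace UPT

/-- Modal formulas over atoms of type `α` (the language `ℒ = {∧,∨,→,⊤,⊥,□,◇}`). -/
inductive Fml (α : Type) : Type where
  | atom : α → Fml α
  | top  : Fml α
  | bot  : Fml α
  | and  : Fml α → Fml α → Fml α
  | or   : Fml α → Fml α → Fml α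
  | imp  : Fml α → Fml α → Fml α
  | box  : Fml α → Fml α
  | dia  : Fml α → Fml α
deriving DecidableEq

variable {α β : Type}

/-- Simultaneous substitution of formulas for atoms. -/
def Fml.subst (σ : β → Fml α) : Fml β → Fml α
  | .atom b  => σ b
  | .top     => .top
  | .bot     => .bot
  | .and A B => .and (A.subst σ) (B.subst σ)
  | .or A B  => .or (A.subst σ) (B.subst σ)
  | .imp A B => .imp (A.subst σ) (B.subst σ)
  | .box A   => .box (A.subst σ)
  | .dia A   => .dia (A.subst σ)

/-- A sequent: a finite multiset antecedent together with a succedent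
containing at most one formula. -/
abbrev Seq (α : Type) : Type := Multiset (Fml α) × Option (Fml α)

/-- A rule set relates a (finite) list of premise sequents to a conclusion sequent. -/
abbrev RuleSet (α : Type) : Type := List (Seq α) → Seq α → Prop

/-- The axioms and rules of the single-conclusion sequent calculus `LJ`, stated
schematically: they are closed under substituting arbitrary formulas for atoms
and arbitrary multisets (resp. succedents) for the context variables. -/
inductive LJRule : List (Seq α) → Seq α → Prop where
  | id (Γ : Multiset (Fml α)) (A : Fml α) : LJRule [] (A ::ₘ Γ, some A)
  | botL (Γ : Multiset (Fml α)) (Δ : Option (Fml α)) : LJRule [] (.bot ::ₘ Γ, Δ)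
  | topR (Γ : Multiset (Fml α)) : LJRule [] (Γ, some .top)
  | wL (A : Fml α) (Γ : Multiset (Fml α)) (Δ : Option (Fml α)) :
      LJRule [(Γ, Δ)] (A ::ₘ Γ, Δ)
  | wR (A : Fml α) (Γ : Multiset (Fml α)) : LJRule [(Γ, none)] (Γ, some A)
  | cL (A : Fml α) (Γ : Multiset (Fml α)) (Δ : Option (Fml α)) :
      LJRule [(A ::ₘ A ::ₘ Γ, Δ)] (A ::ₘ Γ, Δ)
  | cut (A : Fml α) (Γ : Multiset (Fml α)) (Δ : Option (Fml α)) :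
      LJRule [(Γ, some A), (A ::ₘ Γ, Δ)] (Γ, Δ)
  | andL₁ (A B : Fml α) (Γ : Multiset (Fml α)) (Δ : Option (Fml α)) :
      LJRule [(A ::ₘ Γ, Δ)] (.and A B ::ₘ Γ, Δ)
  | andL₂ (A B : Fml α) (Γ : Multiset (Fml α)) (Δ : Option (Fml α)) :
      LJRule [(B ::ₘ Γ, Δ)] (.and A B ::ₘ Γ, Δ)
  | andR (A B : Fml α) (Γ : Multiset (Fml α)) :
      LJRule [(Γ, some A), (Γ, some B)] (Γ, some (.and A B))
  | orL (A B : Fml α) (Γ : Multiset (Fml α)) (Δ : Option (Fml α)) :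
      LJRule [(A ::ₘ Γ, Δ), (B ::ₘ Γ, Δ)] (.or A B ::ₘ Γ, Δ)
  | orR₁ (A B : Fml α) (Γ : Multiset (Fml α)) : LJRule [(Γ, some A)] (Γ, some (.or A B))
  | orR₂ (A B : Fml α) (Γ : Multiset (Fml α)) : LJRule [(Γ, some B)] (Γ, some (.or A B))
  | impL (A B : Fml α) (Γ : Multiset (Fml α)) (Δ : Option (Fml α)) :
      LJRule [(Γ, some A), (B ::ₘ Γ, Δ)] (.imp A B ::ₘ Γ, Δ)
  | impR (A B : Fml α) (Γ : Multiset (Fml α)) :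
      LJRule [(A ::ₘ Γ, some B)] (Γ, some (.imp A B))

/-- The rule `K_□`: from `Γ ⇒ A` infer `□Γ ⇒ □A`. -/
inductive KBoxRule : List (Seq α) → Seq α → Prop where
  | mk (Γ : Multiset (Fml α)) (A : Fml α) :
      KBoxRule [(Γ, some A)] (Γ.map Fml.box, some (.box A))

/-- The rule `K_◇`: from `Γ, A ⇒ B` infer `□Γ, ◇A ⇒ ◇B`. -/
inductive KDiaRule : List (Seq α) → Seq α → Prop where
  | mk (Γ : Multiset (Fml α)) (A B : Fml α) :
      KDiaRule [(A ::ₘ Γ, some B)] (.dia A ::ₘ Γ.map Fml.box, some (.dia B))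

/-- The rule `◇L`: from `Γ, A ⇒ B` infer `Γ, ◇A ⇒ ◇B`. -/
inductive DiaLRule : List (Seq α) → Seq α → Prop where
  | mk (Γ : Multiset (Fml α)) (A B : Fml α) :
      DiaLRule [(A ::ₘ Γ, some B)] (.dia A ::ₘ Γ, some (.dia B))

/-- Adding a set `Ax` of axioms to a calculus: the initial sequents `⇒ σ(A)`
for every substitution instance `σ(A)` of every `A ∈ Ax`. -/
def axRule (Ax : Fml α → Prop) : RuleSet α := fun ps c =>
  ps = [] ∧ ∃ (A : Fml α) (σ : α → Fml α), Ax A ∧ c = ((0 : Multiset (Fml α)), some (A.subst σ))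

/-- Using a set of sequents as additional initial sequents (assumptions). -/
def hypRule (H : Set (Seq α)) : RuleSet α := fun ps c => ps = [] ∧ c ∈ H

/-- The sequent calculus `LJ+Ax`. -/
def LJSys (Ax : Fml α → Prop) : RuleSet α := fun ps c => LJRule ps c ∨ axRule Ax ps c

/-- The sequent calculus `CK+Ax = LJ + K_□ + K_◇ + Ax`. -/
def CKSys (Ax : Fml α → Prop) : RuleSet α := fun ps c =>
  LJRule ps c ∨ KBoxRule ps c ∨ KDiaRule ps c ∨ axRule Ax ps c

/-- The sequent calculus `CK_□+Ax = LJ + K_□ + Ax`. -/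
def CKBoxSys (Ax : Fml α → Prop) : RuleSet α := fun ps c =>
  LJRule ps c ∨ KBoxRule ps c ∨ axRule Ax ps c

/-- The sequent calculus `BLL+Ax = LJ + ◇L + Ax`. -/
def BLLSys (Ax : Fml α → Prop) : RuleSet α := fun ps c =>
  LJRule ps c ∨ DiaLRule ps c ∨ axRule Ax ps c

/-- Provability of a sequent in the calculus generated by a rule set. -/
inductive Derives (R : RuleSet α) : Multiset (Fml α) → Option (Fml α) → Prop where
  | step {ps : List (Seq α)} {c : Seq α} (hr : R ps c)
      (hp : ∀ p ∈ ps, Derives R p.1 p.2) : Derives R c.1 c.2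

/-- Basic formulas: generated from atoms, `⊤`, `⊥` by `∧`, `∨`, `◇`. -/
inductive Basic : Fml α → Prop where
  | atom (a : α) : Basic (.atom a)
  | top : Basic (.top : Fml α)
  | bot : Basic (.bot : Fml α)
  | and {A B : Fml α} : Basic A → Basic B → Basic (.and A B)
  | or {A B : Fml α} : Basic A → Basic B → Basic (.or A B)
  | dia {A : Fml α} : Basic A → Basic (.dia A)

/-- Almost positive formulas: generated from basic formulas by `∧`, `∨`, `□`, `◇`
and implications `A → B` with `A` basic and `B` almost positive. -/
inductive AlmostPos : Fml α → Prop where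
  | basic {A : Fml α} : Basic A → AlmostPos A
  | and {A B : Fml α} : AlmostPos A → AlmostPos B → AlmostPos (.and A B)
  | or {A B : Fml α} : AlmostPos A → AlmostPos B → AlmostPos (.or A B)
  | box {A : Fml α} : AlmostPos A → AlmostPos (.box A)
  | dia {A : Fml α} : AlmostPos A → AlmostPos (.dia A)
  | imp {A B : Fml α} : Basic A → AlmostPos B → AlmostPos (.imp A B)

/-- Constructive formulas: generated from basic formulas by `∧`, `□` and
implications `A → B` with `A` almost positive and `B` constructive. -/
inductive Constructive : Fml α → Prop where
  | basic {A : Fml α} : Basic A → Constructive A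
  | and {A B : Fml α} : Constructive A → Constructive B → Constructive (.and A B)
  | box {A : Fml α} : Constructive A → Constructive (.box A)
  | imp {A B : Fml α} : AlmostPos A → Constructive B → Constructive (.imp A B)

/-- Harrop formulas: atoms, `⊥`, `⊤`, closed under `∧`, `□`, and implications
`A → B` with `A` arbitrary and `B` Harrop. -/
inductive Harrop : Fml α → Prop where
  | atom (a : α) : Harrop (.atom a)
  | top : Harrop (.top : Fml α)
  | bot : Harrop (.bot : Fml α)
  | and {A B : Fml α} : Harrop A → Harrop B → Harrop (.and A B)
  | box {A : Fml α} : Harrop A → Harrop (.box A)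
  | imp (A : Fml α) {B : Fml α} : Harrop B → Harrop (.imp A B)

/-- Conjunction of a list of formulas (`⋀∅ = ⊤`). -/
def conj : List (Fml α) → Fml α
  | [] => .top
  | [A] => A
  | A :: B :: l => .and A (conj (B :: l))

/-- Disjunction of a list of formulas (`⋁∅ = ⊥`). -/
def disj : List (Fml α) → Fml α
  | [] => .bot
  | [A] => A
  | A :: B :: l => .or A (disj (B :: l))

/-- Disjunction of a succedent (at most one formula; `⋁∅ = ⊥`). -/
def odisj : Option (Fml α) → Fml α
  | none => .bot
  | some A => A

/-- The multiset `{A_i → B_i}_{i ∈ I}` of implications of an indexed family. -/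
def imps (AB : List (Fml α × Fml α)) : Multiset (Fml α) :=
  ↑(AB.map fun p => Fml.imp p.1 p.2)

/-- The conjunction `⋀_{i∈I} (A_i → B_i)` of an indexed family of implications. -/
def impConj (AB : List (Fml α × Fml α)) : Fml α :=
  conj (AB.map fun p => Fml.imp p.1 p.2)

/-- Truth in the one-node *irreflexive* frame `𝒦ᵢ` under a Boolean valuation:
`□A` is always true and `◇A` is always false; the propositional connectives
are evaluated classically. -/
def evalI (v : α → Bool) : Fml α → Bool
  | .atom a  => v a
  | .top     => true
  | .bot     => false
  | .and A B => evalI v A && evalI v B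
  | .or A B  => evalI v A || evalI v B
  | .imp A B => !evalI v A || evalI v B
  | .box _   => true
  | .dia _   => false

/-- Truth in the one-node *reflexive* frame `𝒦ᵣ` under a Boolean valuation:
`□A` and `◇A` take the value of `A`. -/
def evalR (v : α → Bool) : Fml α → Bool
  | .atom a  => v a
  | .top     => true
  | .bot     => false
  | .and A B => evalR v A && evalR v B
  | .or A B  => evalR v A || evalR v B
  | .imp A B => !evalR v A || evalR v B
  | .box A   => evalR v A
  | .dia A   => evalR v A

/-- Validity of a sequent with respect to a one-node semantics: under every
valuation, if all formulas of the antecedent are true then so is the succedent. -/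
def SeqValid (ev : (α → Bool) → Fml α → Bool) (Γ : Multiset (Fml α)) (Δ : Option (Fml α)) :
    Prop :=
  ∀ v : α → Bool, (∀ A ∈ Γ, ev v A = true) → ∃ B ∈ Δ, ev v B = true

/-- `CK+Ax` is T-free: every provable sequent is valid in the irreflexive node frame. -/
def TFree (Ax : Fml α → Prop) : Prop :=
  ∀ (Γ : Multiset (Fml α)) (Δ : Option (Fml α)), Derives (CKSys Ax) Γ Δ → SeqValid evalI Γ Δ

/-- `CK+Ax` is T-full: every provable sequent is valid in the reflexive node
frame and the calculus proves `⇒ □p → p` and `⇒ p → ◇p`. -/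
def TFull (Ax : Fml α → Prop) : Prop :=
  (∀ (Γ : Multiset (Fml α)) (Δ : Option (Fml α)), Derives (CKSys Ax) Γ Δ → SeqValid evalR Γ Δ) ∧
  (∀ a : α, Derives (CKSys Ax) 0 (some (.imp (.box (.atom a)) (.atom a)))) ∧
  (∀ a : α, Derives (CKSys Ax) 0 (some (.imp (.atom a) (.dia (.atom a)))))

/-- Classical validity of a (modality-free) sequent: `⋀Γ → ⋁Δ` is true under
every Boolean valuation of the atoms. -/
def ClValid (Γ : Multiset (Fml α)) (Δ : Option (Fml α)) : Prop :=
  ∀ v : α → Bool, (∀ A ∈ Γ, evalI v A = true) → ∃ B ∈ Δ, evalI v B = true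

/-- Nonempty conjunctions of atoms. -/
inductive AtomConj : Fml α → Prop where
  | single (a : α) : AtomConj (.atom a)
  | and {A B : Fml α} : AtomConj A → AtomConj B → AtomConj (.and A B)

/-- Implicational Horn formulas: `⊥`, atoms, and implications `⋀Q → r` with `Q`
a nonempty multiset of atoms and `r` an atom or `⊥`. -/
inductive ImpHorn : Fml α → Prop where
  | bot : ImpHorn (.bot : Fml α)
  | atom (a : α) : ImpHorn (.atom a)
  | impAtom {A : Fml α} (hA : AtomConj A) (a : α) : ImpHorn (.imp A (.atom a))
  | impBot {A : Fml α} (hA : AtomConj A) : ImpHorn (.imp A .bot)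

/-- Formulas of the form `◇^n p` with `p` an atom and `n ≥ 0`. -/
inductive DiaPowAtom : Fml α → Prop where
  | atom (a : α) : DiaPowAtom (.atom a)
  | dia {A : Fml α} : DiaPowAtom A → DiaPowAtom (.dia A)

/-- Nonempty conjunctions `⋀_{i=1}^k ◇^{n_i} p_i` of formulas `◇^{n_i} p_i`. -/
inductive DiaConj : Fml α → Prop where
  | single {A : Fml α} : DiaPowAtom A → DiaConj A
  | and {A B : Fml α} : DiaConj A → DiaConj B → DiaConj (.and A B)

/-- Modal Horn formulas: `⊥` and atoms, closed under `□` and under implications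
`A → B` with `A = ⋀_{i=1}^k ◇^{n_i} p_i` and `B` modal Horn. -/
inductive ModalHorn : Fml α → Prop where
  | bot : ModalHorn (.bot : Fml α)
  | atom (a : α) : ModalHorn (.atom a)
  | box {A : Fml α} : ModalHorn A → ModalHorn (.box A)
  | imp {A B : Fml α} : DiaConj A → ModalHorn B → ModalHorn (.imp A B)

/-- The predicate "all atoms of the formula satisfy `P`". -/
def Fml.AtomsIn (P : α → Prop) : Fml α → Prop
  | .atom a  => P a
  | .top     => True
  | .bot     => True
  | .and A B => A.AtomsIn P ∧ B.AtomsIn P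
  | .or A B  => A.AtomsIn P ∧ B.AtomsIn P
  | .imp A B => A.AtomsIn P ∧ B.AtomsIn P
  | .box A   => A.AtomsIn P
  | .dia A   => A.AtomsIn P

/-- No `◇` occurs in the formula. -/
def Fml.DiaFree : Fml α → Prop
  | .atom _  => True
  | .top     => True
  | .bot     => True
  | .and A B => A.DiaFree ∧ B.DiaFree
  | .or A B  => A.DiaFree ∧ B.DiaFree
  | .imp A B => A.DiaFree ∧ B.DiaFree
  | .box A   => A.DiaFree
  | .dia _   => False

/-- No `□` occurs in the formula. -/
def Fml.BoxFree : Fml α → Prop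
  | .atom _  => True
  | .top     => True
  | .bot     => True
  | .and A B => A.BoxFree ∧ B.BoxFree
  | .or A B  => A.BoxFree ∧ B.BoxFree
  | .imp A B => A.BoxFree ∧ B.BoxFree
  | .box _   => False
  | .dia A   => A.BoxFree

/-- The formula is modality-free (propositional). -/
def Fml.ModFree : Fml α → Prop
  | .atom _  => True
  | .top     => True
  | .bot     => True
  | .and A B => A.ModFree ∧ B.ModFree
  | .or A B  => A.ModFree ∧ B.ModFree
  | .imp A B => A.ModFree ∧ B.ModFree
  | .box _   => False
  | .dia _   => False

/-- An angling of the language: an injection `φ ↦ ⟨φ⟩` from formulas into the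
atoms whose image (the angled atoms) is disjoint from a fixed infinite set of
plain atoms. -/
structure Angling (α : Type) where
  angle : Fml α → α
  plain : Set α
  inj : Function.Injective angle
  plain_infinite : plain.Infinite
  disjoint : ∀ φ : Fml α, angle φ ∉ plain

/-- `a` is an angled atom. -/
def Angling.Angled (S : Angling α) (a : α) : Prop := ∃ φ : Fml α, S.angle φ = a

/-- The translation `t`: `⊥^t = ⊥`, `p^t = ⟨p⟩`, `⊤^t = ⟨⊤⟩`,
`(A ∘ B)^t = (A^t ∘ B^t) ∧ ⟨A ∘ B⟩` and `(○A)^t = (○A^t) ∧ ⟨○A⟩`. -/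
def Angling.tr (S : Angling α) : Fml α → Fml α
  | .atom a  => .atom (S.angle (.atom a))
  | .top     => .atom (S.angle .top)
  | .bot     => .bot
  | .and A B => .and (.and (S.tr A) (S.tr B)) (.atom (S.angle (.and A B)))
  | .or A B  => .and (.or (S.tr A) (S.tr B)) (.atom (S.angle (.or A B)))
  | .imp A B => .and (.imp (S.tr A) (S.tr B)) (.atom (S.angle (.imp A B)))
  | .box A   => .and (.box (S.tr A)) (.atom (S.angle (.box A)))
  | .dia A   => .and (.dia (S.tr A)) (.atom (S.angle (.dia A)))

/-- Action of the standard substitution on atoms: an angled atom `⟨φ⟩` is sent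
to `φ`; plain atoms are fixed. -/
noncomputable def Angling.stdAtom (S : Angling α) (a : α) : Fml α :=
  haveI := Classical.propDecidable (∃ φ : Fml α, S.angle φ = a)
  if h : ∃ φ : Fml α, S.angle φ = a then h.choose else .atom a

/-- The standard substitution `s`: replaces each angled atom `⟨φ⟩` by `φ`,
fixes the plain atoms, and commutes with all connectives. -/
noncomputable def Angling.std (S : Angling α) : Fml α → Fml α :=
  Fml.subst S.stdAtom

/-- The Visser–Harrop property of a calculus. -/
def VisserHarrop (R : RuleSet α) : Prop :=
  ∀ (Γ : Multiset (Fml α)), (∀ A ∈ Γ, Harrop A) →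
  ∀ (AB : List (Fml α × Fml α)) (C D : Fml α),
    Derives R (Γ + imps AB) (some (.or C D)) →
    Derives R (Γ + imps AB) (some C) ∨
    Derives R (Γ + imps AB) (some D) ∨
    ∃ p ∈ AB, Derives R (Γ + imps AB) (some p.1)

/-- The disjunction property of a calculus. -/
def DisjProp (R : RuleSet α) : Prop :=
  ∀ C D : Fml α, Derives R 0 (some (.or C D)) →
    Derives R 0 (some C) ∨ Derives R 0 (some D)

/-- The formula interpretation `I(Γ ⇒ Δ) = ⋀Γ → ⋁Δ` belongs to `L` (stated for
every enumeration of the antecedent multiset as a list). -/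
def interpIn (L : Set (Fml α)) (s : Seq α) : Prop :=
  ∀ l : List (Fml α), (↑l : Multiset (Fml α)) = s.1 → Fml.imp (conj l) (odisj s.2) ∈ L

/- Named modal axioms (with `p := atom 0`, `q := atom 1`). -/
def axTa : Fml ℕ := .imp (.box (.atom 0)) (.atom 0)
def axTb : Fml ℕ := .imp (.atom 0) (.dia (.atom 0))
def axBa : Fml ℕ := .imp (.dia (.box (.atom 0))) (.atom 0)
def axBb : Fml ℕ := .imp (.atom 0) (.box (.dia (.atom 0)))
def ax4a : Fml ℕ := .imp (.box (.atom 0)) (.box (.box (.atom 0)))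
def ax4b : Fml ℕ := .imp (.dia (.dia (.atom 0))) (.dia (.atom 0))
def ax5a : Fml ℕ := .imp (.dia (.box (.atom 0))) (.box (.atom 0))
def ax5b : Fml ℕ := .imp (.dia (.atom 0)) (.box (.dia (.atom 0)))
def axDiaBot : Fml ℕ := .imp (.dia .bot) .bot
def axDiaOr : Fml ℕ :=
  .imp (.dia (.or (.atom 0) (.atom 1))) (.or (.dia (.atom 0)) (.dia (.atom 1)))
def axBoxImp : Fml ℕ :=
  .imp (.imp (.dia (.atom 0)) (.box (.atom 1))) (.box (.imp (.atom 0) (.atom 1)))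

/-- The axioms of `X ⊆ {T, B, 4, 5}` in both their `a`- and `b`-versions. -/
def XAxioms (tT tB t4 t5 : Bool) : Set (Fml ℕ) :=
  (if tT then ({axTa, axTb} : Set (Fml ℕ)) else ∅) ∪
  (if tB then ({axBa, axBb} : Set (Fml ℕ)) else ∅) ∪
  (if t4 then ({ax4a, ax4b} : Set (Fml ℕ)) else ∅) ∪
  (if t5 then ({ax5a, ax5b} : Set (Fml ℕ)) else ∅)

/-- The additional axioms of `IK` over `CK`. -/
def IKExtra : Set (Fml ℕ) := {axDiaBot, axDiaOr, axBoxImp}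

/-- The right rule with premises `{Γ, φ̄_i ⇒ ψ̄_i}_{i∈I}` and conclusion
`Γ, θ̄ ⇒ η̄`, closed under all substitutions of formulas for atoms and
multisets for the context `Γ`. -/
def rightRuleInst (prems : List (List (Fml α) × Option (Fml α)))
    (θ : List (Fml α)) (η : Option (Fml α)) : RuleSet α := fun ps c =>
  ∃ (σ : α → Fml α) (Γ : Multiset (Fml α)),
    ps = prems.map (fun pr =>
        ((Γ + ↑(pr.1.map (Fml.subst σ)) : Multiset (Fml α)), pr.2.map (Fml.subst σ))) ∧
    c = ((Γ + ↑(θ.map (Fml.subst σ)) : Multiset (Fml α)), η.map (Fml.subst σ))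

/-- The left rule with premises `{Γ, φ̄_i ⇒ ψ̄_i}_{i∈I} ∪ {Γ, θ̄_j ⇒ Δ}_{j∈J}`
and conclusion `Γ, η̄ ⇒ Δ`, closed under all substitutions of formulas for
atoms and multisets for `Γ` and `Δ`. -/
def leftRuleInst (prems : List (List (Fml α) × Option (Fml α)))
    (lefts : List (List (Fml α))) (η : List (Fml α)) : RuleSet α := fun ps c =>
  ∃ (σ : α → Fml α) (Γ : Multiset (Fml α)) (Δ : Option (Fml α)),
    ps = prems.map (fun pr =>
          ((Γ + ↑(pr.1.map (Fml.subst σ)) : Multiset (Fml α)), pr.2.map (Fml.subst σ)))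
        ++ lefts.map (fun θj => ((Γ + ↑(θj.map (Fml.subst σ)) : Multiset (Fml α)), Δ)) ∧
    c = ((Γ + ↑(η.map (Fml.subst σ)) : Multiset (Fml α)), Δ)

/-- The formula `Ax_R` of a right rule. -/
def AxRight (prems : List (List (Fml α) × Option (Fml α)))
    (θ : List (Fml α)) (η : Option (Fml α)) : Fml α :=
  .imp (.and (conj (prems.map fun pr => .imp (conj pr.1) (odisj pr.2))) (conj θ)) (odisj η)

/-- The formula `Ax_R` of a left rule. -/
def AxLeft (prems : List (List (Fml α) × Option (Fml α)))
    (lefts : List (List (Fml α))) (η : List (Fml α)) : Fml α :=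
  .imp (.and (conj (prems.map fun pr => .imp (conj pr.1) (odisj pr.2))) (conj η))
    (disj (lefts.map conj))

/-- The forgetful translation `f_i`: fixes atoms, `⊤`, `⊥`, commutes with
`∧`, `∨`, `→`, `□`, and sends every `◇A` to `⊥`. -/
def fi : Fml α → Fml α
  | .atom a  => .atom a
  | .top     => .top
  | .bot     => .bot
  | .and A B => .and (fi A) (fi B)
  | .or A B  => .or (fi A) (fi B)
  | .imp A B => .imp (fi A) (fi B)
  | .box A   => .box (fi A)
  | .dia _   => .bot

/-- The forgetful translation `f_r`: fixes atoms, `⊤`, `⊥`, commutes with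
`∧`, `∨`, `→`, `□`, and sends `◇A` to `f_r A`. -/
def fr : Fml α → Fml α
  | .atom a  => .atom a
  | .top     => .top
  | .bot     => .bot
  | .and A B => .and (fr A) (fr B)
  | .or A B  => .or (fr A) (fr B)
  | .imp A B => .imp (fr A) (fr B)
  | .box A   => .box (fr A)
  | .dia A   => fr A


/-! ### Auxiliary toolkit for the proof of statement 6 -/

section Toolkit

/-- Derivability in pure `CK` (no extra axioms), with a single succedent formula. -/
abbrev D (Γ : Multiset (Fml α)) (A : Fml α) : Prop :=
  Derives (CKSys (fun _ : Fml α => False)) Γ (some A)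

variable {Γ Γ' : Multiset (Fml α)} {A B C : Fml α}

lemma d_id (Γ : Multiset (Fml α)) (A : Fml α) : D (A ::ₘ Γ) A :=
  .step (c := (A ::ₘ Γ, some A)) (Or.inl (LJRule.id Γ A)) (by simp)

lemma d_botL (Γ : Multiset (Fml α)) (A : Fml α) : D (.bot ::ₘ Γ) A :=
  .step (c := (.bot ::ₘ Γ, some A)) (Or.inl (LJRule.botL Γ (some A))) (by simp)

lemma d_topR (Γ : Multiset (Fml α)) : D Γ (.top : Fml α) :=
  .step (c := (Γ, some .top)) (Or.inl (LJRule.topR Γ)) (by simp)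

lemma d_wL (h : D Γ A) (B : Fml α) : D (B ::ₘ Γ) A :=
  .step (c := (B ::ₘ Γ, some A)) (Or.inl (LJRule.wL B Γ (some A)))
    (by intro p hp; simp only [List.mem_singleton] at hp; subst hp; exact h)

lemma d_cut (h1 : D Γ A) (h2 : D (A ::ₘ Γ) B) : D Γ B := by
  refine .step (c := (Γ, some B)) (Or.inl (LJRule.cut A Γ (some B))) ?_
  intro p hp
  simp only [List.mem_cons, List.mem_singleton, List.not_mem_nil, or_false] at hp
  rcases hp with rfl | rfl
  · exact h1
  · exact h2

lemma d_mono (hle : Γ ≤ Γ') (h : D Γ A) : D Γ' A := by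
  obtain ⟨u, rfl⟩ := Multiset.le_iff_exists_add.mp hle
  clear hle
  induction u using Multiset.induction with
  | empty => simpa using h
  | cons a u ih =>
    have e : Γ + (a ::ₘ u) = a ::ₘ (Γ + u) := by
      rw [Multiset.add_cons]
    rw [e]; exact d_wL ih a

lemma d_mem (hA : A ∈ Γ) : D Γ A := by
  obtain ⟨t, rfl⟩ := Multiset.exists_cons_of_mem hA
  exact d_id t A

lemma d_cut' {Γ₀ : Multiset (Fml α)} (h1 : D Γ A) (h2 : D (A ::ₘ Γ₀) B)
    (hle : Γ₀ ≤ Γ) : D Γ B :=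
  d_cut h1 (d_mono (Multiset.cons_le_cons A hle) h2)

lemma d_andL₁ (h : D (A ::ₘ Γ) C) (B : Fml α) : D (.and A B ::ₘ Γ) C :=
  .step (c := (.and A B ::ₘ Γ, some C)) (Or.inl (LJRule.andL₁ A B Γ (some C)))
    (by intro p hp; simp only [List.mem_singleton] at hp; subst hp; exact h)

lemma d_andL₂ (h : D (B ::ₘ Γ) C) (A : Fml α) : D (.and A B ::ₘ Γ) C :=
  .step (c := (.and A B ::ₘ Γ, some C)) (Or.inl (LJRule.andL₂ A B Γ (some C)))
    (by intro p hp; simp only [List.mem_singleton] at hp; subst hp; exact h)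

lemma d_andR (h1 : D Γ A) (h2 : D Γ B) : D Γ (.and A B) := by
  refine .step (c := (Γ, some (.and A B))) (Or.inl (LJRule.andR A B Γ)) ?_
  intro p hp
  simp only [List.mem_cons, List.mem_singleton, List.not_mem_nil, or_false] at hp
  rcases hp with rfl | rfl
  · exact h1
  · exact h2

lemma d_andE₁ (h : D Γ (.and A B)) : D Γ A :=
  d_cut h (d_andL₁ (d_id Γ A) B)

lemma d_andE₂ (h : D Γ (.and A B)) : D Γ B :=
  d_cut h (d_andL₂ (d_id Γ B) A)

lemma d_orL (h1 : D (A ::ₘ Γ) C) (h2 : D (B ::ₘ Γ) C) : D (.or A B ::ₘ Γ) C := by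
  refine .step (c := (.or A B ::ₘ Γ, some C)) (Or.inl (LJRule.orL A B Γ (some C))) ?_
  intro p hp
  simp only [List.mem_cons, List.mem_singleton, List.not_mem_nil, or_false] at hp
  rcases hp with rfl | rfl
  · exact h1
  · exact h2

lemma d_orR₁ (h : D Γ A) (B : Fml α) : D Γ (.or A B) :=
  .step (c := (Γ, some (.or A B))) (Or.inl (LJRule.orR₁ A B Γ))
    (by intro p hp; simp only [List.mem_singleton] at hp; subst hp; exact h)

lemma d_orR₂ (h : D Γ B) (A : Fml α) : D Γ (.or A B) :=
  .step (c := (Γ, some (.or A B))) (Or.inl (LJRule.orR₂ A B Γ))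
    (by intro p hp; simp only [List.mem_singleton] at hp; subst hp; exact h)

lemma d_orE (h : D Γ (.or A B)) (h1 : D (A ::ₘ Γ) C) (h2 : D (B ::ₘ Γ) C) : D Γ C :=
  d_cut h (d_orL h1 h2)

lemma d_impL (h1 : D Γ A) (h2 : D (B ::ₘ Γ) C) : D (.imp A B ::ₘ Γ) C := by
  refine .step (c := (.imp A B ::ₘ Γ, some C)) (Or.inl (LJRule.impL A B Γ (some C))) ?_
  intro p hp
  simp only [List.mem_cons, List.mem_singleton, List.not_mem_nil, or_false] at hp
  rcases hp with rfl | rfl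
  · exact h1
  · exact h2

lemma d_impR (h : D (A ::ₘ Γ) B) : D Γ (.imp A B) :=
  .step (c := (Γ, some (.imp A B))) (Or.inl (LJRule.impR A B Γ))
    (by intro p hp; simp only [List.mem_singleton] at hp; subst hp; exact h)

lemma d_mp (h1 : D Γ A) (h2 : Fml.imp A B ∈ Γ) : D Γ B :=
  d_cut (d_mem h2) (d_impL h1 (d_id Γ B))

lemma d_kbox (h : D Γ A) : D (Γ.map .box) (.box A) :=
  .step (c := (Γ.map .box, some (.box A))) (Or.inr (Or.inl (KBoxRule.mk Γ A)))
    (by intro p hp; simp only [List.mem_singleton] at hp; subst hp; exact h)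

lemma d_kdia (h : D (A ::ₘ Γ) B) : D (.dia A ::ₘ Γ.map .box) (.dia B) :=
  .step (c := (.dia A ::ₘ Γ.map .box, some (.dia B)))
    (Or.inr (Or.inr (Or.inl (KDiaRule.mk Γ A B))))
    (by intro p hp; simp only [List.mem_singleton] at hp; subst hp; exact h)

lemma d_conj : ∀ (l : List (Fml α)), (∀ F ∈ l, D 0 F) → D 0 (conj l)
  | [], _ => d_topR 0
  | [A], h => h A (by simp)
  | A :: B :: l, h => by
    show D 0 (.and A (conj (B :: l)))
    exact d_andR (h A (by simp))
      (d_conj (B :: l) (fun F hF => h F (List.mem_cons_of_mem A hF)))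

lemma stdAtom_angle (S : Angling α) (ψ : Fml α) : S.stdAtom (S.angle ψ) = ψ := by
  unfold Angling.stdAtom
  have h : ∃ φ : Fml α, S.angle φ = S.angle ψ := ⟨ψ, rfl⟩
  rw [dif_pos h]
  exact S.inj h.choose_spec

/-- `tr ψ ⇒ ⟨ψ⟩` is always derivable. -/
lemma tr_angle (S : Angling α) (ψ : Fml α) : D (S.tr ψ ::ₘ 0) (.atom (S.angle ψ)) := by
  cases ψ with
  | atom a => exact d_id _ _
  | top => exact d_id _ _
  | bot => exact d_botL _ _
  | and A B => exact d_andE₂ (d_id _ _)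
  | or A B => exact d_andE₂ (d_id _ _)
  | imp A B => exact d_andE₂ (d_id _ _)
  | box A => exact d_andE₂ (d_id _ _)
  | dia A => exact d_andE₂ (d_id _ _)

lemma coe_le_left (l₁ l₂ : List (Fml α)) : (↑l₁ : Multiset (Fml α)) ≤ ↑(l₁ ++ l₂) := by
  rw [show ((↑(l₁ ++ l₂) : Multiset (Fml α))) = ↑l₁ + ↑l₂ from rfl]
  exact Multiset.le_add_right _ _

lemma coe_le_right (l₁ l₂ : List (Fml α)) : (↑l₂ : Multiset (Fml α)) ≤ ↑(l₁ ++ l₂) := by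
  rw [show ((↑(l₁ ++ l₂) : Multiset (Fml α))) = ↑l₁ + ↑l₂ from rfl]
  exact Multiset.le_add_left _ _

lemma coe_map_box (l : List (Fml α)) :
    ((↑l : Multiset (Fml α)).map Fml.box) = (↑(l.map Fml.box) : Multiset (Fml α)) := by
  simp

/-- Forward direction for basic formulas: `(B(φ̄))^t ⇒ B(φ̄^t)`. -/
lemma basic_fwd (S : Angling α) {k : ℕ} (φ : Fin k → Fml α) :
    ∀ {B : Fml (Fin k)}, Basic B →
      D (S.tr (B.subst φ) ::ₘ 0) (B.subst fun i => S.tr (φ i)) := by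
  intro B hB
  induction hB with
  | atom a => exact d_id _ _
  | top => exact d_topR _
  | bot => exact d_botL _ _
  | @and B C _ _ ihB ihC =>
    simp only [Fml.subst, Angling.tr]
    refine d_andR ?_ ?_
    · exact d_cut' (d_andE₁ (d_andE₁ (d_id _ _))) ihB (Multiset.zero_le _)
    · exact d_cut' (d_andE₂ (d_andE₁ (d_id _ _))) ihC (Multiset.zero_le _)
  | @or B C _ _ ihB ihC =>
    simp only [Fml.subst, Angling.tr]
    refine d_orE (d_andE₁ (d_id _ _)) ?_ ?_
    · exact d_orR₁ (d_mono (Multiset.cons_le_cons _ (Multiset.zero_le _)) ihB) _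
    · exact d_orR₂ (d_mono (Multiset.cons_le_cons _ (Multiset.zero_le _)) ihC) _
  | @dia B _ ihB =>
    simp only [Fml.subst, Angling.tr]
    refine d_cut' (d_andE₁ (d_id _ _)) ?_ (Multiset.zero_le _)
    have := d_kdia (Γ := 0) ihB
    simpa using this

/-- Backward direction for basic formulas: `Ψ, B(φ̄^t) ⇒ (B(φ̄))^t` with `Ψ`
a list of modal Horn formulas over angled atoms whose standard substitutions
are derivable. -/
lemma basic_bwd (S : Angling α) {k : ℕ} (φ : Fin k → Fml α) :
    ∀ {B : Fml (Fin k)}, Basic B →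
      ∃ Ψ : List (Fml α),
        (∀ F ∈ Ψ, ModalHorn F ∧ F.AtomsIn S.Angled ∧ D 0 (S.std F)) ∧
        D ((B.subst fun i => S.tr (φ i)) ::ₘ (↑Ψ : Multiset (Fml α)))
          (S.tr (B.subst φ)) := by
  intro B hB
  induction hB with
  | atom a =>
    exact ⟨[], by simp, by exact d_id _ _⟩
  | top =>
    refine ⟨[.atom (S.angle .top)], ?_, ?_⟩
    · intro F hF
      simp only [List.mem_singleton] at hF
      subst hF
      refine ⟨ModalHorn.atom _, ⟨.top, rfl⟩, ?_⟩
      show D 0 (S.stdAtom (S.angle .top))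
      rw [stdAtom_angle]
      exact d_topR _
    · show D (Fml.top ::ₘ ↑[Fml.atom (S.angle Fml.top)]) (Fml.atom (S.angle Fml.top))
      exact d_mem (by simp)
  | bot => exact ⟨[], by simp, by exact d_botL _ _⟩
  | @and B C _ _ ihB ihC =>
    obtain ⟨Ψ₁, h₁, d₁⟩ := ihB
    obtain ⟨Ψ₂, h₂, d₂⟩ := ihC
    set horn : Fml α :=
      .imp (.and (.atom (S.angle (B.subst φ))) (.atom (S.angle (C.subst φ))))
        (.atom (S.angle ((B.subst φ).and (C.subst φ)))) with hhorn
    refine ⟨Ψ₁ ++ Ψ₂ ++ [horn], ?_, ?_⟩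
    · intro F hF
      simp only [List.mem_append, List.mem_singleton] at hF
      rcases hF with (hF | hF) | rfl
      · exact h₁ F hF
      · exact h₂ F hF
      · refine ⟨ModalHorn.imp (DiaConj.and (.single (.atom _)) (.single (.atom _)))
          (ModalHorn.atom _), ⟨⟨⟨_, rfl⟩, ⟨_, rfl⟩⟩, ⟨_, rfl⟩⟩, ?_⟩
        show D 0 (Fml.subst S.stdAtom horn)
        simp only [hhorn, Fml.subst, stdAtom_angle]
        exact d_impR (d_id _ _)
    · simp only [Fml.subst, Angling.tr]
      set Bt : Fml α := B.subst fun i => S.tr (φ i) with hBt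
      set Ct : Fml α := C.subst fun i => S.tr (φ i) with hCt
      set Γf : Multiset (Fml α) := (Fml.and Bt Ct) ::ₘ ↑(Ψ₁ ++ Ψ₂ ++ [horn]) with hΓ
      have le₁ : (↑Ψ₁ : Multiset (Fml α)) ≤ Γf :=
        le_trans (le_trans (coe_le_left Ψ₁ Ψ₂) (coe_le_left _ [horn]))
          (Multiset.le_cons_self _ _)
      have le₂ : (↑Ψ₂ : Multiset (Fml α)) ≤ Γf :=
        le_trans (le_trans (coe_le_right Ψ₁ Ψ₂) (coe_le_left _ [horn]))
          (Multiset.le_cons_self _ _)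
      have hAnd : D Γf (Fml.and Bt Ct) := d_mem (by simp [hΓ])
      have dB : D Γf (S.tr (B.subst φ)) := d_cut' (d_andE₁ hAnd) d₁ le₁
      have dC : D Γf (S.tr (C.subst φ)) := d_cut' (d_andE₂ hAnd) d₂ le₂
      have aB : D Γf (.atom (S.angle (B.subst φ))) :=
        d_cut' dB (tr_angle S _) (Multiset.zero_le _)
      have aC : D Γf (.atom (S.angle (C.subst φ))) :=
        d_cut' dC (tr_angle S _) (Multiset.zero_le _)
      have hmem : horn ∈ Γf := by simp [hΓ, hhorn]
      exact d_andR (d_andR dB dC) (d_mp (d_andR aB aC) hmem)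
  | @or B C _ _ ihB ihC =>
    obtain ⟨Ψ₁, h₁, d₁⟩ := ihB
    obtain ⟨Ψ₂, h₂, d₂⟩ := ihC
    set hornB : Fml α :=
      .imp (.atom (S.angle (B.subst φ))) (.atom (S.angle ((B.subst φ).or (C.subst φ)))) with hhB
    set hornC : Fml α :=
      .imp (.atom (S.angle (C.subst φ))) (.atom (S.angle ((B.subst φ).or (C.subst φ)))) with hhC
    refine ⟨Ψ₁ ++ Ψ₂ ++ [hornB, hornC], ?_, ?_⟩
    · intro F hF
      simp only [List.mem_append, List.mem_cons, List.mem_singleton, List.not_mem_nil,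
        or_false] at hF
      rcases hF with (hF | hF) | rfl | rfl
      · exact h₁ F hF
      · exact h₂ F hF
      · refine ⟨ModalHorn.imp (DiaConj.single (.atom _)) (ModalHorn.atom _),
          ⟨⟨_, rfl⟩, ⟨_, rfl⟩⟩, ?_⟩
        show D 0 (Fml.subst S.stdAtom hornB)
        simp only [hhB, Fml.subst, stdAtom_angle]
        exact d_impR (d_orR₁ (d_id _ _) _)
      · refine ⟨ModalHorn.imp (DiaConj.single (.atom _)) (ModalHorn.atom _),
          ⟨⟨_, rfl⟩, ⟨_, rfl⟩⟩, ?_⟩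
        show D 0 (Fml.subst S.stdAtom hornC)
        simp only [hhC, Fml.subst, stdAtom_angle]
        exact d_impR (d_orR₂ (d_id _ _) _)
    · simp only [Fml.subst, Angling.tr]
      set Bt : Fml α := B.subst fun i => S.tr (φ i) with hBt
      set Ct : Fml α := C.subst fun i => S.tr (φ i) with hCt
      set Γf : Multiset (Fml α) := (Fml.or Bt Ct) ::ₘ ↑(Ψ₁ ++ Ψ₂ ++ [hornB, hornC]) with hΓ
      have le₁ : (↑Ψ₁ : Multiset (Fml α)) ≤ Γf :=
        le_trans (le_trans (coe_le_left Ψ₁ Ψ₂) (coe_le_left _ _))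
          (Multiset.le_cons_self _ _)
      have le₂ : (↑Ψ₂ : Multiset (Fml α)) ≤ Γf :=
        le_trans (le_trans (coe_le_right Ψ₁ Ψ₂) (coe_le_left _ _))
          (Multiset.le_cons_self _ _)
      have hOr : D Γf (Fml.or Bt Ct) := d_mem (by simp [hΓ])
      refine d_orE hOr ?_ ?_
      · have dB : D (Bt ::ₘ Γf) (S.tr (B.subst φ)) :=
          d_mono (Multiset.cons_le_cons _ le₁) d₁
        have aB : D (Bt ::ₘ Γf) (.atom (S.angle (B.subst φ))) :=
          d_cut' dB (tr_angle S _) (Multiset.zero_le _)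
        refine d_andR (d_orR₁ dB _) (d_mp aB ?_)
        exact Multiset.mem_cons_of_mem (by simp [hΓ, hhB, hhC])
      · have dC : D (Ct ::ₘ Γf) (S.tr (C.subst φ)) :=
          d_mono (Multiset.cons_le_cons _ le₂) d₂
        have aC : D (Ct ::ₘ Γf) (.atom (S.angle (C.subst φ))) :=
          d_cut' dC (tr_angle S _) (Multiset.zero_le _)
        refine d_andR (d_orR₂ dC _) (d_mp aC ?_)
        exact Multiset.mem_cons_of_mem (by simp [hΓ, hhB, hhC])
  | @dia B _ ihB =>
    obtain ⟨Ψ₁, h₁, d₁⟩ := ihB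
    set horn : Fml α :=
      .imp (.dia (.atom (S.angle (B.subst φ)))) (.atom (S.angle (Fml.dia (B.subst φ)))) with hh
    refine ⟨Ψ₁.map Fml.box ++ [horn], ?_, ?_⟩
    · intro F hF
      simp only [List.mem_append, List.mem_singleton, List.mem_map] at hF
      rcases hF with ⟨G, hG, rfl⟩ | rfl
      · obtain ⟨hm, ha, hd⟩ := h₁ G hG
        refine ⟨hm.box, ha, ?_⟩
        show D 0 (.box (Fml.subst S.stdAtom G))
        have := d_kbox (Γ := 0) hd
        simpa [Angling.std] using this
      · refine ⟨ModalHorn.imp (DiaConj.single (.dia (.atom _))) (ModalHorn.atom _),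
          ⟨⟨_, rfl⟩, ⟨_, rfl⟩⟩, ?_⟩
        show D 0 (Fml.subst S.stdAtom horn)
        simp only [hh, Fml.subst, stdAtom_angle]
        exact d_impR (d_id _ _)
    · simp only [Fml.subst, Angling.tr]
      set Bt : Fml α := B.subst fun i => S.tr (φ i) with hBt
      set Γf : Multiset (Fml α) := (Fml.dia Bt) ::ₘ ↑(Ψ₁.map Fml.box ++ [horn]) with hΓ
      have lem : (Fml.dia Bt ::ₘ ((↑Ψ₁ : Multiset (Fml α)).map Fml.box)) ≤ Γf := by
        rw [coe_map_box]
        exact Multiset.cons_le_cons _ (coe_le_left _ _)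
      have s1 : D Γf (.dia (S.tr (B.subst φ))) := d_mono lem (d_kdia d₁)
      have s2 : D (Bt ::ₘ (↑Ψ₁ : Multiset (Fml α))) (.atom (S.angle (B.subst φ))) :=
        d_cut' d₁ (tr_angle S _) (Multiset.zero_le _)
      have s3 : D Γf (.dia (.atom (S.angle (B.subst φ)))) := d_mono lem (d_kdia s2)
      exact d_andR s1 (d_mp s3 (by simp [hΓ, hh]))

/-- Main induction: commutation of `t` with almost positive formulas. -/
lemma ap_main (S : Angling α) {k : ℕ} (φ : Fin k → Fml α) :
    ∀ {A : Fml (Fin k)}, AlmostPos A →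
      ∃ Φ : List (Fml α),
        (∀ F ∈ Φ, ModalHorn F ∧ F.AtomsIn S.Angled ∧ D 0 (S.std F)) ∧
        D (S.tr (A.subst φ) ::ₘ (↑Φ : Multiset (Fml α))) (A.subst fun i => S.tr (φ i)) := by
  intro A hA
  induction hA with
  | @basic A hB =>
    exact ⟨[], by simp, by simpa using basic_fwd S φ hB⟩
  | @and B C _ _ ihB ihC =>
    obtain ⟨Φ₁, h₁, d₁⟩ := ihB
    obtain ⟨Φ₂, h₂, d₂⟩ := ihC
    refine ⟨Φ₁ ++ Φ₂, ?_, ?_⟩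
    · intro F hF
      rcases List.mem_append.mp hF with hF | hF
      · exact h₁ F hF
      · exact h₂ F hF
    · simp only [Fml.subst, Angling.tr]
      set Γf : Multiset (Fml α) :=
        (Fml.and (Fml.and (S.tr (B.subst φ)) (S.tr (C.subst φ)))
          (.atom (S.angle ((B.subst φ).and (C.subst φ))))) ::ₘ ↑(Φ₁ ++ Φ₂) with hΓ
      have le₁ : (↑Φ₁ : Multiset (Fml α)) ≤ Γf :=
        le_trans (coe_le_left _ _) (Multiset.le_cons_self _ _)
      have le₂ : (↑Φ₂ : Multiset (Fml α)) ≤ Γf :=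
        le_trans (coe_le_right _ _) (Multiset.le_cons_self _ _)
      have hBig : D Γf (Fml.and (Fml.and (S.tr (B.subst φ)) (S.tr (C.subst φ)))
          (.atom (S.angle ((B.subst φ).and (C.subst φ))))) := d_mem (by simp [hΓ])
      have hAnd : D Γf (Fml.and (S.tr (B.subst φ)) (S.tr (C.subst φ))) := d_andE₁ hBig
      exact d_andR (d_cut' (d_andE₁ hAnd) d₁ le₁) (d_cut' (d_andE₂ hAnd) d₂ le₂)
  | @or B C _ _ ihB ihC =>
    obtain ⟨Φ₁, h₁, d₁⟩ := ihB
    obtain ⟨Φ₂, h₂, d₂⟩ := ihC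
    refine ⟨Φ₁ ++ Φ₂, ?_, ?_⟩
    · intro F hF
      rcases List.mem_append.mp hF with hF | hF
      · exact h₁ F hF
      · exact h₂ F hF
    · simp only [Fml.subst, Angling.tr]
      set Γf : Multiset (Fml α) :=
        (Fml.and (Fml.or (S.tr (B.subst φ)) (S.tr (C.subst φ)))
          (.atom (S.angle ((B.subst φ).or (C.subst φ))))) ::ₘ ↑(Φ₁ ++ Φ₂) with hΓ
      have le₁ : (↑Φ₁ : Multiset (Fml α)) ≤ Γf :=
        le_trans (coe_le_left _ _) (Multiset.le_cons_self _ _)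
      have le₂ : (↑Φ₂ : Multiset (Fml α)) ≤ Γf :=
        le_trans (coe_le_right _ _) (Multiset.le_cons_self _ _)
      have hBig : D Γf (Fml.and (Fml.or (S.tr (B.subst φ)) (S.tr (C.subst φ)))
          (.atom (S.angle ((B.subst φ).or (C.subst φ))))) := d_mem (by simp [hΓ])
      refine d_orE (d_andE₁ hBig) ?_ ?_
      · exact d_orR₁ (d_mono (Multiset.cons_le_cons _ le₁) d₁) _
      · exact d_orR₂ (d_mono (Multiset.cons_le_cons _ le₂) d₂) _
  | @box B _ ihB =>
    obtain ⟨Φ₁, h₁, d₁⟩ := ihB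
    refine ⟨Φ₁.map Fml.box, ?_, ?_⟩
    · intro F hF
      obtain ⟨G, hG, rfl⟩ := List.mem_map.mp hF
      obtain ⟨hm, ha, hd⟩ := h₁ G hG
      refine ⟨hm.box, ha, ?_⟩
      show D 0 (.box (Fml.subst S.stdAtom G))
      have := d_kbox (Γ := 0) hd
      simpa [Angling.std] using this
    · simp only [Fml.subst, Angling.tr]
      have h2 : D (.box (S.tr (B.subst φ)) ::ₘ ↑(Φ₁.map Fml.box))
          (.box (B.subst fun i => S.tr (φ i))) := by
        have := d_kbox d₁
        simpa using this
      have hBig : D (Fml.and (.box (S.tr (B.subst φ)))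
            (.atom (S.angle (Fml.box (B.subst φ)))) ::ₘ ↑(Φ₁.map Fml.box))
          (Fml.and (.box (S.tr (B.subst φ))) (.atom (S.angle (Fml.box (B.subst φ))))) :=
        d_id _ _
      exact d_cut' (d_andE₁ hBig) h2 (Multiset.le_cons_self _ _)
  | @dia B _ ihB =>
    obtain ⟨Φ₁, h₁, d₁⟩ := ihB
    refine ⟨Φ₁.map Fml.box, ?_, ?_⟩
    · intro F hF
      obtain ⟨G, hG, rfl⟩ := List.mem_map.mp hF
      obtain ⟨hm, ha, hd⟩ := h₁ G hG
      refine ⟨hm.box, ha, ?_⟩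
      show D 0 (.box (Fml.subst S.stdAtom G))
      have := d_kbox (Γ := 0) hd
      simpa [Angling.std] using this
    · simp only [Fml.subst, Angling.tr]
      have h2 : D (.dia (S.tr (B.subst φ)) ::ₘ ↑(Φ₁.map Fml.box))
          (.dia (B.subst fun i => S.tr (φ i))) := by
        have := d_kdia d₁
        simpa [coe_map_box] using this
      have hBig : D (Fml.and (.dia (S.tr (B.subst φ)))
            (.atom (S.angle (Fml.dia (B.subst φ)))) ::ₘ ↑(Φ₁.map Fml.box))
          (Fml.and (.dia (S.tr (B.subst φ))) (.atom (S.angle (Fml.dia (B.subst φ))))) :=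
        d_id _ _
      exact d_cut' (d_andE₁ hBig) h2 (Multiset.le_cons_self _ _)
  | @imp B C hB _ ihC =>
    obtain ⟨Ψ, hΨ, dΨ⟩ := basic_bwd S φ hB
    obtain ⟨Φ₂, h₂, d₂⟩ := ihC
    refine ⟨Ψ ++ Φ₂, ?_, ?_⟩
    · intro F hF
      rcases List.mem_append.mp hF with hF | hF
      · exact hΨ F hF
      · exact h₂ F hF
    · simp only [Fml.subst, Angling.tr]
      set Bt : Fml α := B.subst fun i => S.tr (φ i) with hBt
      set Γ' : Multiset (Fml α) := Bt ::ₘ (Fml.and (.imp (S.tr (B.subst φ)) (S.tr (C.subst φ)))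
        (.atom (S.angle ((B.subst φ).imp (C.subst φ))))) ::ₘ ↑(Ψ ++ Φ₂) with hΓ'
      refine d_impR ?_
      have leΨ : (↑Ψ : Multiset (Fml α)) ≤ (Fml.and (.imp (S.tr (B.subst φ)) (S.tr (C.subst φ)))
          (.atom (S.angle ((B.subst φ).imp (C.subst φ))))) ::ₘ ↑(Ψ ++ Φ₂) :=
        le_trans (coe_le_left _ _) (Multiset.le_cons_self _ _)
      have leΦ : (↑Φ₂ : Multiset (Fml α)) ≤ Γ' :=
        le_trans (le_trans (coe_le_right _ _) (Multiset.le_cons_self _ _))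
          (Multiset.le_cons_self _ _)
      have dtrB : D Γ' (S.tr (B.subst φ)) :=
        d_mono (Multiset.cons_le_cons _ leΨ) dΨ
      have hBig : D Γ' (Fml.and (.imp (S.tr (B.subst φ)) (S.tr (C.subst φ)))
          (.atom (S.angle ((B.subst φ).imp (C.subst φ))))) := d_mem (by simp [hΓ'])
      have dimp : D Γ' (.imp (S.tr (B.subst φ)) (S.tr (C.subst φ))) := d_andE₁ hBig
      have dtrC : D Γ' (S.tr (C.subst φ)) :=
        d_cut dimp (d_impL dtrB (d_id _ _))
      exact d_cut' dtrC d₂ leΦ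

end Toolkit

/-- commutation of the translation `t` with almost positive
formulas. -/
theorem statement_6 (S : Angling ℕ) (k : ℕ) (A : Fml (Fin k)) (hA : AlmostPos A)
    (φ : Fin k → Fml ℕ) :
    ∃ Φ : List (Fml ℕ),
      (∀ F ∈ Φ, ModalHorn F ∧ F.AtomsIn S.Angled) ∧
      Derives (CKSys (fun _ : Fml ℕ => False))
        (S.tr (A.subst φ) ::ₘ (↑Φ : Multiset (Fml ℕ)))
        (some (A.subst fun i => S.tr (φ i))) ∧
      Derives (CKSys (fun _ : Fml ℕ => False)) 0 (some (conj (Φ.map S.std))) := by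
  obtain ⟨Φ, hΦ, hd⟩ := ap_main S φ hA
  refine ⟨Φ, fun F hF => ⟨(hΦ F hF).1, (hΦ F hF).2.1⟩, hd, ?_⟩
  refine d_conj (Φ.map S.std) ?_
  intro F hF
  obtain ⟨G, hG, rfl⟩ := List.mem_map.mp hF
  exact (hΦ G hG).2.2

end UPT
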